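/- In any (1,d)-representation of an edge-bicoloured graph containing a red n×k grid with vertices u_{i,j} (0 ≤ i ≤ n, 0 ≤ j ≤ k), every unit 4-cycle u_{i,j} u_{i+1,j} u_{i+1,j+1} u_{i,j+1} maps to a parallelogram, and consequently the vector equality u_{0,k} − u_{0,0} = u_{n,k} − u_{n,0} holds. -/

import Mathlib

lemma rhombus_coord (x0 x1 y0 y1 a0 a1 c0 c1 : ℝ)
    (hXA : (x0 - a0)^2 + (x1 - a1)^2 = 1)
    (hXC : (x0 - c0)^2 + (x1 - c1)^2 = 1)
    (hYA : (y0 - a0)^2 + (y1 - a1)^2 = 1)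
    (hYC : (y0 - c0)^2 + (y1 - c1)^2 = 1)
    (hXY : (x0 - y0)^2 + (x1 - y1)^2 ≠ 0)
    (hAC : (a0 - c0)^2 + (a1 - c1)^2 ≠ 0) :
    x0 + y0 = a0 + c0 ∧ x1 + y1 = a1 + c1 := by
  set p := x0 - y0 with hp
  set q := x1 - y1 with hq
  set r := a0 - c0 with hr
  set s := a1 - c1 with hs
  set e := x0 + y0 - a0 - c0 with he
  set f := x1 + y1 - a1 - c1 with hf
  have h1 : p * e + q * f = 0 := by
    simp only [hp, hq, he, hf]; linear_combination (hXA - hYA + hXC - hYC) / 2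
  have h2 : r * e + s * f = 0 := by
    simp only [hr, hs, he, hf]; linear_combination (-(hXA - hXC + hYA - hYC)) / 2
  have h3 : p * r + q * s = 0 := by
    simp only [hp, hq, hr, hs]; linear_combination (-(hXA - hXC - hYA + hYC)) / 2
  have hpq : p^2 + q^2 > 0 := lt_of_le_of_ne (by positivity) (by simpa [hp, hq] using (Ne.symm hXY))
  have hrs : r^2 + s^2 > 0 := lt_of_le_of_ne (by positivity) (by simpa [hr, hs] using (Ne.symm hAC))
  have hdet : (p * s - q * r)^2 > 0 := by nlinarith [sq_nonneg (p*r + q*s)]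
  have hdet' : p * s - q * r ≠ 0 := by
    intro h; rw [h] at hdet; simp at hdet
  have he0 : e = 0 := by
    have h4 : e * (p * s - q * r) = s * (p * e + q * f) - q * (r * e + s * f) := by ring
    rw [h1, h2] at h4
    simpa [hdet'] using (mul_eq_zero.mp (by linarith : e * (p*s - q*r) = 0))
  have hf0 : f = 0 := by
    have h4 : f * (p * s - q * r) = p * (r * e + s * f) - r * (p * e + q * f) := by ring
    rw [h1, h2] at h4
    simpa [hdet'] using (mul_eq_zero.mp (by linarith : f * (p*s - q*r) = 0))
  constructor <;> [linarith [he0]; linarith [hf0]]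

lemma dist_coord (x y : EuclideanSpace ℝ (Fin 2)) (h : dist x y = 1) :
    (x 0 - y 0)^2 + (x 1 - y 1)^2 = 1 := by
  have h2 : dist x y ^ 2 = 1 := by rw [h]; norm_num
  rw [EuclideanSpace.dist_eq] at h2
  rw [Real.sq_sqrt (by positivity)] at h2
  simpa [Fin.sum_univ_two, Real.dist_eq, sq_abs] using h2

lemma ne_coord (x y : EuclideanSpace ℝ (Fin 2)) (h : x ≠ y) :
    (x 0 - y 0)^2 + (x 1 - y 1)^2 ≠ 0 := by
  intro h0
  apply h
  have h1 : x 0 - y 0 = 0 := by nlinarith [sq_nonneg (x 0 - y 0), sq_nonneg (x 1 - y 1)]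
  have h2 : x 1 - y 1 = 0 := by nlinarith [sq_nonneg (x 0 - y 0), sq_nonneg (x 1 - y 1)]
  ext i
  fin_cases i
  · exact sub_eq_zero.mp h1
  · exact sub_eq_zero.mp h2

lemma rhombus (X Y A C : EuclideanSpace ℝ (Fin 2))
    (hXA : dist X A = 1) (hXC : dist X C = 1)
    (hYA : dist Y A = 1) (hYC : dist Y C = 1)
    (hXY : X ≠ Y) (hAC : A ≠ C) : X + Y = A + C := by
  obtain ⟨h0, h1⟩ := rhombus_coord (X 0) (X 1) (Y 0) (Y 1) (A 0) (A 1) (C 0) (C 1)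
    (dist_coord X A hXA) (dist_coord X C hXC) (dist_coord Y A hYA) (dist_coord Y C hYC)
    (ne_coord X Y hXY) (ne_coord A C hAC)
  ext i
  fin_cases i
  · show X 0 + Y 0 = A 0 + C 0; exact h0
  · show X 1 + Y 1 = A 1 + C 1; exact h1

/-- In any `(1,d)`-representation of a graph containing a red `n×k` grid
(with injectively placed vertices `u i j`, unit-length grid edges), every unit
4-cycle maps to a parallelogram, and `u 0 k − u 0 0 = u n k − u n 0`. -/
theorem grid_parallelogram (n k : ℕ) (u : ℕ → ℕ → EuclideanSpace ℝ (Fin 2))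
    (hinj : ∀ i j i' j', i ≤ n → j ≤ k → i' ≤ n → j' ≤ k →
      u i j = u i' j' → i = i' ∧ j = j')
    (hrow : ∀ i j, i ≤ n → j < k → dist (u i j) (u i (j + 1)) = 1)
    (hcol : ∀ i j, i < n → j ≤ k → dist (u i j) (u (i + 1) j) = 1) :
    (∀ i j, i < n → j < k →
      u (i + 1) j - u i j = u (i + 1) (j + 1) - u i (j + 1)) ∧
    u 0 k - u 0 0 = u n k - u n 0 := by
  have hpar : ∀ i j, i < n → j < k →
      u (i + 1) j - u i j = u (i + 1) (j + 1) - u i (j + 1) := by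
    intro i j hi hj
    have hXA : dist (u (i+1) j) (u i j) = 1 := by
      rw [dist_comm]; exact hcol i j hi hj.le
    have hXC : dist (u (i+1) j) (u (i+1) (j+1)) = 1 := hrow (i+1) j hi hj
    have hYA : dist (u i (j+1)) (u i j) = 1 := by
      rw [dist_comm]; exact hrow i j hi.le hj
    have hYC : dist (u i (j+1)) (u (i+1) (j+1)) = 1 := hcol i (j+1) hi hj
    have hXY : u (i+1) j ≠ u i (j+1) := by
      intro h
      exact absurd (hinj (i+1) j i (j+1) hi hj.le hi.le hj h).1 (by omega)
    have hAC : u i j ≠ u (i+1) (j+1) := by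
      intro h
      exact absurd (hinj i j (i+1) (j+1) hi.le hj.le hi hj h).1 (by omega)
    have key := rhombus (u (i+1) j) (u i (j+1)) (u i j) (u (i+1) (j+1))
      hXA hXC hYA hYC hXY hAC
    have : u (i+1) j + u i (j+1) - u i j - u i (j+1) =
        u i j + u (i+1) (j+1) - u i j - u i (j+1) := by rw [key]
    linear_combination (norm := abel) this
  refine ⟨hpar, ?_⟩
  -- column vectors are constant along rows
  have hrowconst : ∀ i, i < n → ∀ j, j ≤ k →
      u (i + 1) j - u i j = u (i + 1) 0 - u i 0 := by
    intro i hi j hj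
    induction j with
    | zero => rfl
    | succ m ih =>
      have hm : m < k := by omega
      rw [← hpar i m hi hm]
      exact ih (by omega)
  -- telescope over rows
  have htel : ∀ i, i ≤ n → u i k - u i 0 = u 0 k - u 0 0 := by
    intro i hi
    induction i with
    | zero => rfl
    | succ m ih =>
      have hm : m < n := by omega
      have h1 := hrowconst m hm k le_rfl
      have h2 := ih (by omega)
      have : u (m+1) k - u m k = u (m+1) 0 - u m 0 := by
        linear_combination (norm := abel) h1
      linear_combination (norm := abel) this + h2
  exact (htel n le_rfl).symm
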